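/- Let M be a graph every finite induced subgraph of which lies in K₀, and let A be a finite set of vertices of M. Then δ(cl(A)) ≤ δ(A), and δ(B) ≥ dim(A) for every finite set B of vertices with cl(A) ⊆ B. -/

import Mathlib

open scoped Cardinal

/-- Number of edges of the graph `G` with both endpoints in `A`
(ordered pairs counted and divided by two). -/
noncomputable def edgeCount {V : Type*} (G : SimpleGraph V) (A : Set V) : ℕ :=
  {p : V × V | p.1 ∈ A ∧ p.2 ∈ A ∧ G.Adj p.1 p.2}.ncard / 2

/-- The pre-dimension `δ(A) = m·|A| − e(A)`. -/
noncomputable def delta {V : Type*} (m : ℕ) (G : SimpleGraph V) (A : Set V) : ℤ :=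
  (m : ℤ) * A.ncard - edgeCount G A

/-- `A` is self-sufficient (`≤`-closed) in `B`:  `A ⊆ B` and `δ(A') ≥ δ(A)` for
every finite `A'` with `A ⊆ A' ⊆ B`. -/
def SelfSuff {V : Type*} (m : ℕ) (G : SimpleGraph V) (A B : Set V) : Prop :=
  A ⊆ B ∧ ∀ A' : Set V, A'.Finite → A ⊆ A' → A' ⊆ B → delta m G A ≤ delta m G A'

/-- A graph belongs to the class `K₀` if `δ(A') ≥ 0` for every set `A'` of its
vertices (used for finite graphs). -/
def InK0 {V : Type*} (m : ℕ) (G : SimpleGraph V) : Prop :=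
  ∀ A : Set V, 0 ≤ delta m G A

/-- `G` is a `(K₀,≤)`-generic graph: (i) it is the union of an increasing chain of
finite self-sufficient subsets; (ii) every isomorphism between finite self-sufficient
induced subgraphs extends to an automorphism; (iii) every finite graph in `K₀` is
isomorphic to the induced subgraph on some finite self-sufficient subset. -/
def IsGeneric (m : ℕ) {V : Type} (G : SimpleGraph V) : Prop :=
  (∃ F : ℕ → Set V, (∀ n, (F n).Finite) ∧ (∀ n, F n ⊆ F (n + 1)) ∧
      (∀ n, SelfSuff m G (F n) Set.univ) ∧ (⋃ n, F n) = Set.univ) ∧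
  (∀ A B : Set V, A.Finite → B.Finite → SelfSuff m G A Set.univ → SelfSuff m G B Set.univ →
      ∀ e : G.induce A ≃g G.induce B, ∃ g : G ≃g G, ∀ a : A, g a = (e a : V)) ∧
  (∀ (W : Type) (_ : Fintype W) (H : SimpleGraph W), InK0 m H →
      ∃ s : Set V, s.Finite ∧ SelfSuff m G s Set.univ ∧ Nonempty (H ≃g G.induce s))

/-- The self-sufficient closure `cl(A)`: the intersection of all finite
self-sufficient subsets of the ambient graph containing `A` (which is the smallest
such set whenever a smallest one exists). -/
def scl {V : Type*} (m : ℕ) (G : SimpleGraph V) (A : Set V) : Set V :=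
  ⋂₀ {B : Set V | A ⊆ B ∧ B.Finite ∧ SelfSuff m G B Set.univ}

/-- The dimension `d(A) = δ(cl(A))`. -/
noncomputable def gdim {V : Type*} (m : ℕ) (G : SimpleGraph V) (A : Set V) : ℤ :=
  delta m G (scl m G A)

/-- The geometric closure
`gcl(X) = { v : d(A ∪ {v}) = d(A) for some finite A ⊆ X }`. -/
def gcl {V : Type*} (m : ℕ) (G : SimpleGraph V) (X : Set V) : Set V :=
  {v | ∃ A : Set V, A ⊆ X ∧ A.Finite ∧ gdim m G (A ∪ {v}) = gdim m G A}

/-- The pointwise stabilizer `Aut_A(M)` of a set `A` of vertices, as a subgroup of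
the automorphism group. -/
def pointStab {V : Type*} (G : SimpleGraph V) (A : Set V) : Subgroup (G ≃g G) where
  carrier := {g | ∀ a ∈ A, g a = a}
  one_mem' := fun a _ => rfl
  mul_mem' := by
    intro g h hg hh a ha
    show g (h a) = a
    rw [hh a ha, hg a ha]
  inv_mem' := by
    intro g hg a ha
    show g⁻¹ a = a
    conv_lhs => rw [← hg a ha]
    simp

/-- The setwise stabilizer `Aut_{{X}}(M) = { g : g[X] = X }` of a set `X` of
vertices, as a subgroup of the automorphism group. -/
def setStab {V : Type*} (G : SimpleGraph V) (X : Set V) : Subgroup (G ≃g G) where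
  carrier := {g | (fun v => g v) '' X = X}
  one_mem' := by simp
  mul_mem' := by
    intro g h hg hh
    show (fun v => g (h v)) '' X = X
    rw [show (fun v => g (h v)) = (fun v => g v) ∘ (fun v => h v) from rfl,
      Set.image_comp, hh, hg]
  inv_mem' := by
    intro g hg
    show (fun v => g⁻¹ v) '' X = X
    conv_lhs => rw [← hg]
    rw [← Set.image_comp]
    have : (fun v => g⁻¹ v) ∘ (fun v => g v) = id := by
      funext v
      show g⁻¹ (g v) = v
      simp
    rw [this, Set.image_id]

/-- The topology of pointwise convergence on the automorphism group of a graph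
(the vertex set being discrete). -/
def autTop (V : Type*) (G : SimpleGraph V) : TopologicalSpace (G ≃g G) :=
  TopologicalSpace.induced (fun g => (g : V → V))
    (@Pi.topologicalSpace V (fun _ => V) (fun _ => ⊥))


section DeltaClosureAux

variable {V : Type*}

private def dpairs (G : SimpleGraph V) (S : Set V) : Set (V × V) :=
  {p : V × V | p.1 ∈ S ∧ p.2 ∈ S ∧ G.Adj p.1 p.2}

private lemma dpairs_finite (G : SimpleGraph V) {S : Set V} (hS : S.Finite) :
    (dpairs G S).Finite :=
  (hS.prod hS).subset fun p hp => ⟨hp.1, hp.2.1⟩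

private lemma even_ncard_dpairs (G : SimpleGraph V) {S : Set V} (hS : S.Finite) :
    Even (dpairs G S).ncard := by
  letI : LinearOrder V := IsWellOrder.linearOrder WellOrderingRel
  have hfin := dpairs_finite G hS
  set L : Set (V × V) := {p | p ∈ dpairs G S ∧ p.1 < p.2} with hL
  set R : Set (V × V) := {p | p ∈ dpairs G S ∧ p.2 < p.1} with hR
  have hsplit : dpairs G S = L ∪ R := by
    ext p
    constructor
    · intro hp
      rcases lt_trichotomy p.1 p.2 with h | h | h
      · exact Or.inl ⟨hp, h⟩
      · exact absurd hp.2.2 (by rw [h]; exact G.irrefl)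
      · exact Or.inr ⟨hp, h⟩
    · rintro (h | h) <;> exact h.1
  have himg : R = Prod.swap '' L := by
    ext p
    constructor
    · intro hp
      exact ⟨p.swap, ⟨⟨hp.1.2.1, hp.1.1, hp.1.2.2.symm⟩, hp.2⟩, p.swap_swap⟩
    · rintro ⟨q, ⟨⟨h1, h2, h3⟩, hlt⟩, rfl⟩
      exact ⟨⟨h2, h1, h3.symm⟩, hlt⟩
  have hdisj : Disjoint L R := by
    rw [Set.disjoint_left]
    rintro p ⟨_, h1⟩ ⟨_, h2⟩
    exact absurd (h1.trans h2) (lt_irrefl _)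
  have hLfin : L.Finite := hfin.subset (by rw [hsplit]; exact Set.subset_union_left)
  have hRfin : R.Finite := hfin.subset (by rw [hsplit]; exact Set.subset_union_right)
  have hcard : (dpairs G S).ncard = L.ncard + R.ncard := by
    rw [hsplit, Set.ncard_union_eq hdisj hLfin hRfin]
  have hRL : R.ncard = L.ncard := by
    rw [himg, Set.ncard_image_of_injective _ Prod.swap_injective]
  exact ⟨L.ncard, by rw [hcard, hRL]⟩

private lemma two_mul_edgeCount (G : SimpleGraph V) {S : Set V} (hS : S.Finite) :
    2 * edgeCount G S = (dpairs G S).ncard :=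
  Nat.two_mul_div_two_of_even (even_ncard_dpairs G hS)

private lemma dpairs_inter (G : SimpleGraph V) (X Y : Set V) :
    dpairs G (X ∩ Y) = dpairs G X ∩ dpairs G Y := by
  ext p
  constructor
  · rintro ⟨⟨h1, h2⟩, ⟨h3, h4⟩, h5⟩
    exact ⟨⟨h1, h3, h5⟩, ⟨h2, h4, h5⟩⟩
  · rintro ⟨⟨h1, h2, h3⟩, ⟨h4, h5, _⟩⟩
    exact ⟨⟨h1, h4⟩, ⟨h2, h5⟩, h3⟩

private lemma dpairs_union_subset (G : SimpleGraph V) (X Y : Set V) :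
    dpairs G X ∪ dpairs G Y ⊆ dpairs G (X ∪ Y) := by
  rintro p (⟨h1, h2, h3⟩ | ⟨h1, h2, h3⟩)
  · exact ⟨Or.inl h1, Or.inl h2, h3⟩
  · exact ⟨Or.inr h1, Or.inr h2, h3⟩

/-- Submodularity of δ. -/
private lemma delta_submod (m : ℕ) (G : SimpleGraph V) {X Y : Set V}
    (hX : X.Finite) (hY : Y.Finite) :
    delta m G (X ∪ Y) + delta m G (X ∩ Y) ≤ delta m G X + delta m G Y := by
  have hcard : (X ∪ Y).ncard + (X ∩ Y).ncard = X.ncard + Y.ncard :=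
    Set.ncard_union_add_ncard_inter X Y hX hY
  have hpair : (dpairs G X).ncard + (dpairs G Y).ncard ≤
      (dpairs G (X ∪ Y)).ncard + (dpairs G (X ∩ Y)).ncard := by
    have h1 : (dpairs G X).ncard + (dpairs G Y).ncard =
        (dpairs G X ∪ dpairs G Y).ncard + (dpairs G X ∩ dpairs G Y).ncard :=
      (Set.ncard_union_add_ncard_inter _ _ (dpairs_finite G hX) (dpairs_finite G hY)).symm
    rw [h1, ← dpairs_inter]
    exact Nat.add_le_add_right
      (Set.ncard_le_ncard (dpairs_union_subset G X Y) (dpairs_finite G (hX.union hY))) _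
  have e1 := two_mul_edgeCount G hX
  have e2 := two_mul_edgeCount G hY
  have e3 := two_mul_edgeCount G (hX.union hY)
  have e4 := two_mul_edgeCount G (hX.inter_of_left Y)
  have key : 2 * (delta m G (X ∪ Y) + delta m G (X ∩ Y)) ≤
      2 * (delta m G X + delta m G Y) := by
    simp only [delta]
    have hc : ((X ∪ Y).ncard : ℤ) + (X ∩ Y).ncard = (X.ncard : ℤ) + Y.ncard := by
      exact_mod_cast congrArg (Nat.cast : ℕ → ℤ) hcard
    have hp : ((dpairs G X).ncard : ℤ) + (dpairs G Y).ncard ≤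
        ((dpairs G (X ∪ Y)).ncard : ℤ) + (dpairs G (X ∩ Y)).ncard := by
      exact_mod_cast hpair
    have f1 : 2 * (edgeCount G X : ℤ) = (dpairs G X).ncard := by exact_mod_cast e1
    have f2 : 2 * (edgeCount G Y : ℤ) = (dpairs G Y).ncard := by exact_mod_cast e2
    have f3 : 2 * (edgeCount G (X ∪ Y) : ℤ) = (dpairs G (X ∪ Y)).ncard := by exact_mod_cast e3
    have f4 : 2 * (edgeCount G (X ∩ Y) : ℤ) = (dpairs G (X ∩ Y)).ncard := by exact_mod_cast e4
    have hcm : (m : ℤ) * (X ∪ Y).ncard + (m : ℤ) * (X ∩ Y).ncard =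
        (m : ℤ) * X.ncard + (m : ℤ) * Y.ncard := by
      rw [← mul_add, ← mul_add, hc]
    linarith
  linarith

end DeltaClosureAux

/-- In a graph all of whose finite induced subgraphs lie in `K₀`:
`δ(cl(A)) ≤ δ(A)`, and `δ(B) ≥ d(A)` for every finite `B ⊇ cl(A)`. -/
theorem delta_closure {V : Type*} (m : ℕ) (hm : 2 ≤ m) (G : SimpleGraph V)
    (hK0 : ∀ A : Set V, A.Finite → 0 ≤ delta m G A)
    (A : Set V) (hA : A.Finite) :
    delta m G (scl m G A) ≤ delta m G A ∧
      ∀ B : Set V, B.Finite → scl m G A ⊆ B → gdim m G A ≤ delta m G B := by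
  classical
  -- the set of values of δ on finite supersets of A
  set Nvals : Set ℕ := {n | ∃ B : Set V, B.Finite ∧ A ⊆ B ∧ delta m G B = (n : ℤ)} with hNvals
  have hAval : (delta m G A).toNat ∈ Nvals :=
    ⟨A, hA, subset_rfl, (Int.toNat_of_nonneg (hK0 A hA)).symm⟩
  set d : ℕ := sInf Nvals with hd
  have hdmem : d ∈ Nvals := Nat.sInf_mem ⟨_, hAval⟩
  have hmin : ∀ B : Set V, B.Finite → A ⊆ B → (d : ℤ) ≤ delta m G B := by
    intro B hB hAB
    have h0 : 0 ≤ delta m G B := hK0 B hB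
    have : (delta m G B).toNat ∈ Nvals := ⟨B, hB, hAB, (Int.toNat_of_nonneg h0).symm⟩
    have := Nat.sInf_le this
    omega
  have hdA : (d : ℤ) ≤ delta m G A := hmin A hA subset_rfl
  -- the set of cardinalities of minimizers
  set Cards : Set ℕ :=
    {k | ∃ B : Set V, B.Finite ∧ A ⊆ B ∧ delta m G B = (d : ℤ) ∧ B.ncard = k} with hCards
  have hCardsne : Cards.Nonempty := by
    obtain ⟨B, hB, hAB, hdB⟩ := hdmem
    exact ⟨B.ncard, B, hB, hAB, hdB, rfl⟩
  obtain ⟨B₀, hB₀fin, hAB₀, hdB₀, hcardB₀⟩ := Nat.sInf_mem hCardsne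
  -- B₀ is self-sufficient
  have hB₀ss : SelfSuff m G B₀ Set.univ := by
    refine ⟨Set.subset_univ _, fun A' hA' hsub _ => ?_⟩
    rw [hdB₀]
    exact hmin A' hA' (hAB₀.trans hsub)
  have hB₀mem : B₀ ∈ {B : Set V | A ⊆ B ∧ B.Finite ∧ SelfSuff m G B Set.univ} :=
    ⟨hAB₀, hB₀fin, hB₀ss⟩
  -- B₀ is contained in every finite self-sufficient superset of A
  have hleast : ∀ C : Set V, A ⊆ C → C.Finite → SelfSuff m G C Set.univ → B₀ ⊆ C := by
    intro C hAC hCfin hCss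
    have h1 : delta m G C ≤ delta m G (B₀ ∪ C) :=
      hCss.2 (B₀ ∪ C) (hB₀fin.union hCfin) Set.subset_union_right (Set.subset_univ _)
    have h2 := delta_submod m G hB₀fin hCfin
    have h3 : (d : ℤ) ≤ delta m G (B₀ ∩ C) :=
      hmin _ (hB₀fin.inter_of_left C) (Set.subset_inter hAB₀ hAC)
    have h4 : delta m G (B₀ ∩ C) = (d : ℤ) := le_antisymm (by rw [← hdB₀]; linarith) h3
    have h5 : (B₀ ∩ C).ncard ∈ Cards :=
      ⟨B₀ ∩ C, hB₀fin.inter_of_left C, Set.subset_inter hAB₀ hAC, h4, rfl⟩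
    have h6 : B₀.ncard ≤ (B₀ ∩ C).ncard := hcardB₀ ▸ Nat.sInf_le h5
    have h7 : B₀ ∩ C = B₀ :=
      Set.eq_of_subset_of_ncard_le Set.inter_subset_left h6 hB₀fin
    rw [← h7]
    exact Set.inter_subset_right
  -- hence scl A = B₀
  have hscl : scl m G A = B₀ := by
    apply subset_antisymm
    · exact Set.sInter_subset_of_mem hB₀mem
    · exact Set.subset_sInter fun C hC => hleast C hC.1 hC.2.1 hC.2.2
  constructor
  · rw [hscl, hdB₀]; exact hdA
  · intro B hBfin hsclB
    rw [gdim, hscl, hdB₀]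
    exact hmin B hBfin (hAB₀.trans (hscl ▸ hsclB))
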